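/- Let J, K ⊆ ℝ be open intervals, let A : (0,∞) × K → ℝ be C³ and B : J × K → ℝ be C³ with B_{yyy}(y,t) ≠ 0 for all (y,t) ∈ J × K. Suppose G(p,y,t) = A(p,t) + p·B(y,t) satisfies the G-equation G_{yp}² − G_{yy} G_{pp} − G_{pt} = 0 for all (p,y,t) ∈ (0,∞) × J × K. Then there exist a constant μ ∈ ℝ and functions κ, ρ : K → ℝ such that A(p,t) = μ(p·ln p − p) + κ(t)·p + ρ(t) for all (p,t) ∈ (0,∞) × K. -/

import Mathlib

/-- Partial derivative of `f : ℝ³ → ℝ` in direction `v`, as a function. -/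
noncomputable def pd (v : ℝ × ℝ × ℝ) (f : ℝ × ℝ × ℝ → ℝ) : ℝ × ℝ × ℝ → ℝ :=
  fun q => fderiv ℝ f q v

/-- ∂/∂p for functions `G(p,y,t)`. -/
noncomputable def px : (ℝ × ℝ × ℝ → ℝ) → ℝ × ℝ × ℝ → ℝ := pd (1, 0, 0)
/-- ∂/∂y. -/
noncomputable def py : (ℝ × ℝ × ℝ → ℝ) → ℝ × ℝ × ℝ → ℝ := pd (0, 1, 0)
/-- ∂/∂t. -/
noncomputable def pt : (ℝ × ℝ × ℝ → ℝ) → ℝ × ℝ × ℝ → ℝ := pd (0, 0, 1)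

/-- Partial derivative of `f : ℝ² → ℝ` in direction `v`, as a function. -/
noncomputable def pd2 (v : ℝ × ℝ) (f : ℝ × ℝ → ℝ) : ℝ × ℝ → ℝ :=
  fun z => fderiv ℝ f z v

/-- Derivative in the first coordinate (i.e. `p` for `A(p,t)`, `y` for `B(y,t)`). -/
noncomputable def p1 : (ℝ × ℝ → ℝ) → ℝ × ℝ → ℝ := pd2 (1, 0)
/-- Derivative in the second coordinate (i.e. `t`). -/
noncomputable def p2 : (ℝ × ℝ → ℝ) → ℝ × ℝ → ℝ := pd2 (0, 1)

/- ### Auxiliary lemmas -/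

lemma pd2_contDiffOn {f : ℝ × ℝ → ℝ} {s : Set (ℝ × ℝ)} (hs : IsOpen s)
    {n m : WithTop ℕ∞} (hf : ContDiffOn ℝ n f s) (hmn : m + 1 ≤ n) (v : ℝ × ℝ) :
    ContDiffOn ℝ m (pd2 v f) s :=
  (hf.fderiv_of_isOpen hs hmn).clm_apply contDiffOn_const

lemma diffAt_of_contDiffOn {F : ℝ × ℝ → ℝ} {s : Set (ℝ × ℝ)} (hs : IsOpen s)
    {n : WithTop ℕ∞} (hF : ContDiffOn ℝ n F s) (hn : 1 ≤ n) {z : ℝ × ℝ} (hz : z ∈ s) :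
    DifferentiableAt ℝ F z :=
  (hF.differentiableOn (zero_lt_one.trans_le hn).ne').differentiableAt (hs.mem_nhds hz)

lemma pd2_comm {f : ℝ × ℝ → ℝ} {z : ℝ × ℝ} (hf : ContDiffAt ℝ 2 f z) (v w : ℝ × ℝ) :
    pd2 v (pd2 w f) z = pd2 w (pd2 v f) z := by
  have hdiff : DifferentiableAt ℝ (fderiv ℝ f) z := by
    have : ContDiffAt ℝ 1 (fderiv ℝ f) z := hf.fderiv_right (le_refl _)
    exact this.differentiableAt one_ne_zero
  have key : ∀ u u' : ℝ × ℝ, pd2 u (pd2 u' f) z = fderiv ℝ (fderiv ℝ f) z u u' := by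
    intro u u'
    show fderiv ℝ (fun y => (fderiv ℝ f y) u') z u = _
    rw [fderiv_clm_apply hdiff (differentiableAt_const u')]
    simp
  rw [key, key]
  exact (hf.isSymmSndFDerivAt (by simp)) v w

lemma hasDerivAt_pd2_fst {F : ℝ × ℝ → ℝ} {a b : ℝ} (hF : DifferentiableAt ℝ F (a, b)) :
    HasDerivAt (fun x => F (x, b)) (pd2 (1, 0) F (a, b)) a := by
  have h1 : HasDerivAt (fun x : ℝ => ((x, b) : ℝ × ℝ)) ((1 : ℝ), (0 : ℝ)) a :=
    (hasDerivAt_id a).prodMk (hasDerivAt_const a b)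
  exact hF.hasFDerivAt.comp_hasDerivAt a h1

lemma hasDerivAt_pd2_snd {F : ℝ × ℝ → ℝ} {a b : ℝ} (hF : DifferentiableAt ℝ F (a, b)) :
    HasDerivAt (fun x => F (a, x)) (pd2 (0, 1) F (a, b)) b := by
  have h1 : HasDerivAt (fun x : ℝ => ((a, x) : ℝ × ℝ)) ((0 : ℝ), (1 : ℝ)) b :=
    (hasDerivAt_const b a).prodMk (hasDerivAt_id b)
  exact hF.hasFDerivAt.comp_hasDerivAt b h1

lemma const_of_hasDerivAt_zero {s : Set ℝ} (hs : Convex ℝ s) (hso : IsOpen s) {f : ℝ → ℝ}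
    (hf : ∀ x ∈ s, HasDerivAt f 0 x) {x y : ℝ} (hx : x ∈ s) (hy : y ∈ s) : f x = f y := by
  apply hs.is_const_of_fderivWithin_eq_zero
    (fun z hz => (hf z hz).differentiableAt.differentiableWithinAt) ?_ hx hy
  intro z hz
  rw [fderivWithin_of_isOpen hso hz, (hf z hz).hasFDerivAt.fderiv]
  ext
  simp

/-- the continuous linear map `(p,y,t) ↦ (p,t)` -/
noncomputable def phiL : (ℝ × ℝ × ℝ) →L[ℝ] ℝ × ℝ :=
  (ContinuousLinearMap.fst ℝ ℝ (ℝ × ℝ)).prod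
    ((ContinuousLinearMap.snd ℝ ℝ ℝ).comp (ContinuousLinearMap.snd ℝ ℝ (ℝ × ℝ)))

/-- derivative of `r ↦ F (r.1, r.2.2)` -/
lemma fderiv_compA {F : ℝ × ℝ → ℝ} {r : ℝ × ℝ × ℝ} (hF : DifferentiableAt ℝ F (r.1, r.2.2))
    (v : ℝ × ℝ × ℝ) :
    fderiv ℝ (fun q : ℝ × ℝ × ℝ => F (q.1, q.2.2)) r v = fderiv ℝ F (r.1, r.2.2) (v.1, v.2.2) := by
  have : HasFDerivAt (fun q : ℝ × ℝ × ℝ => F (q.1, q.2.2))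
      ((fderiv ℝ F (r.1, r.2.2)).comp phiL) r := hF.hasFDerivAt.comp r phiL.hasFDerivAt
  rw [this.fderiv]; rfl

lemma diffAt_compA {F : ℝ × ℝ → ℝ} {r : ℝ × ℝ × ℝ} (hF : DifferentiableAt ℝ F (r.1, r.2.2)) :
    DifferentiableAt ℝ (fun q : ℝ × ℝ × ℝ => F (q.1, q.2.2)) r :=
  (hF.hasFDerivAt.comp r phiL.hasFDerivAt).differentiableAt

/-- derivative of `r ↦ F r.2` -/
lemma fderiv_compB {F : ℝ × ℝ → ℝ} {r : ℝ × ℝ × ℝ} (hF : DifferentiableAt ℝ F r.2)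
    (v : ℝ × ℝ × ℝ) :
    fderiv ℝ (fun q : ℝ × ℝ × ℝ => F q.2) r v = fderiv ℝ F r.2 v.2 := by
  have : HasFDerivAt (fun q : ℝ × ℝ × ℝ => F q.2)
      ((fderiv ℝ F r.2).comp (ContinuousLinearMap.snd ℝ ℝ (ℝ × ℝ))) r :=
    hF.hasFDerivAt.comp r (hasFDerivAt_snd)
  rw [this.fderiv]; rfl

lemma diffAt_compB {F : ℝ × ℝ → ℝ} {r : ℝ × ℝ × ℝ} (hF : DifferentiableAt ℝ F r.2) :
    DifferentiableAt ℝ (fun q : ℝ × ℝ × ℝ => F q.2) r :=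
  (hF.hasFDerivAt.comp r (hasFDerivAt_snd)).differentiableAt

/-- derivative of `r ↦ r.1 * F r.2` -/
lemma fderiv_mulB {F : ℝ × ℝ → ℝ} {r : ℝ × ℝ × ℝ} (hF : DifferentiableAt ℝ F r.2)
    (v : ℝ × ℝ × ℝ) :
    fderiv ℝ (fun q : ℝ × ℝ × ℝ => q.1 * F q.2) r v
      = v.1 * F r.2 + r.1 * fderiv ℝ F r.2 v.2 := by
  have h1 : HasFDerivAt (fun q : ℝ × ℝ × ℝ => q.1) (ContinuousLinearMap.fst ℝ ℝ (ℝ × ℝ)) r :=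
    hasFDerivAt_fst
  have h2 : HasFDerivAt (fun q : ℝ × ℝ × ℝ => F q.2)
      ((fderiv ℝ F r.2).comp (ContinuousLinearMap.snd ℝ ℝ (ℝ × ℝ))) r :=
    hF.hasFDerivAt.comp r (hasFDerivAt_snd)
  rw [(h1.fun_mul h2).fderiv]
  simp [add_comm, mul_comm]

lemma diffAt_mulB {F : ℝ × ℝ → ℝ} {r : ℝ × ℝ × ℝ} (hF : DifferentiableAt ℝ F r.2) :
    DifferentiableAt ℝ (fun q : ℝ × ℝ × ℝ => q.1 * F q.2) r :=
  differentiableAt_fst.mul (diffAt_compB hF)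

/-- sum of A-type and B-type compositions -/
lemma fderiv_sumAB {F H : ℝ × ℝ → ℝ} {r : ℝ × ℝ × ℝ} (hF : DifferentiableAt ℝ F (r.1, r.2.2))
    (hH : DifferentiableAt ℝ H r.2) (v : ℝ × ℝ × ℝ) :
    fderiv ℝ (fun q : ℝ × ℝ × ℝ => F (q.1, q.2.2) + H q.2) r v
      = fderiv ℝ F (r.1, r.2.2) (v.1, v.2.2) + fderiv ℝ H r.2 v.2 := by
  rw [fderiv_fun_add (diffAt_compA hF) (diffAt_compB hH)]
  simp only [ContinuousLinearMap.add_apply]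
  rw [fderiv_compA hF, fderiv_compB hH]

lemma fderiv_gfun {A B : ℝ × ℝ → ℝ} {r : ℝ × ℝ × ℝ} (hA : DifferentiableAt ℝ A (r.1, r.2.2))
    (hB : DifferentiableAt ℝ B r.2) (v : ℝ × ℝ × ℝ) :
    fderiv ℝ (fun q : ℝ × ℝ × ℝ => A (q.1, q.2.2) + q.1 * B (q.2.1, q.2.2)) r v
      = fderiv ℝ A (r.1, r.2.2) (v.1, v.2.2) + (v.1 * B r.2 + r.1 * fderiv ℝ B r.2 v.2) := by
  have : (fun q : ℝ × ℝ × ℝ => A (q.1, q.2.2) + q.1 * B (q.2.1, q.2.2))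
      = fun q : ℝ × ℝ × ℝ => A (q.1, q.2.2) + q.1 * B q.2 := rfl
  rw [this, fderiv_fun_add (diffAt_compA hA) (diffAt_mulB hB)]
  simp only [ContinuousLinearMap.add_apply]
  rw [fderiv_compA hA, fderiv_mulB hB]

/-- The reduced form of the G-equation: `B_y² - p B_yy A_pp - (A_pt + B_t) = 0`. -/
lemma key_equation (J K : Set ℝ) (hJo : IsOpen J) (hKo : IsOpen K)
    (A B : ℝ × ℝ → ℝ)
    (hA : ContDiffOn ℝ 3 A (Set.Ioi (0 : ℝ) ×ˢ K))
    (hB : ContDiffOn ℝ 3 B (J ×ˢ K))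
    (hG : ∀ p > (0 : ℝ), ∀ y ∈ J, ∀ t ∈ K,
      (px (py (fun r => A (r.1, r.2.2) + r.1 * B (r.2.1, r.2.2))) (p, y, t)) ^ 2
        - py (py (fun r => A (r.1, r.2.2) + r.1 * B (r.2.1, r.2.2))) (p, y, t)
            * px (px (fun r => A (r.1, r.2.2) + r.1 * B (r.2.1, r.2.2))) (p, y, t)
        - pt (px (fun r => A (r.1, r.2.2) + r.1 * B (r.2.1, r.2.2))) (p, y, t) = 0) :
    ∀ p > (0 : ℝ), ∀ y ∈ J, ∀ t ∈ K,
      (p1 B (y, t)) ^ 2 - (p * p1 (p1 B) (y, t)) * (p1 (p1 A) (p, t))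
        - (p2 (p1 A) (p, t) + p2 B (y, t)) = 0 := by
  have hV : IsOpen (Set.Ioi (0 : ℝ) ×ˢ K) := isOpen_Ioi.prod hKo
  have hW : IsOpen (J ×ˢ K) := hJo.prod hKo
  have hU : IsOpen (Set.Ioi (0 : ℝ) ×ˢ (J ×ˢ K)) := isOpen_Ioi.prod hW
  have hA1 : ContDiffOn ℝ 2 (p1 A) (Set.Ioi (0 : ℝ) ×ˢ K) :=
    pd2_contDiffOn hV hA (by norm_num) _
  have hB1 : ContDiffOn ℝ 2 (p1 B) (J ×ˢ K) := pd2_contDiffOn hW hB (by norm_num) _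
  set g : ℝ × ℝ × ℝ → ℝ := fun r => A (r.1, r.2.2) + r.1 * B (r.2.1, r.2.2) with hg
  intro p hp y hy t ht
  have hrV : ((p, y, t) : ℝ × ℝ × ℝ).1 ∈ Set.Ioi (0:ℝ) := hp
  have hmemV : (((p, y, t) : ℝ × ℝ × ℝ).1, ((p, y, t) : ℝ × ℝ × ℝ).2.2) ∈
      Set.Ioi (0 : ℝ) ×ˢ K := Set.mem_prod.mpr ⟨hp, ht⟩
  have hmemW : (((p, y, t) : ℝ × ℝ × ℝ).2) ∈ J ×ˢ K := Set.mem_prod.mpr ⟨hy, ht⟩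
  have hmemU : ((p, y, t) : ℝ × ℝ × ℝ) ∈ Set.Ioi (0 : ℝ) ×ˢ (J ×ˢ K) :=
    Set.mem_prod.mpr ⟨hp, hmemW⟩
  -- first stage: px g and py g on U
  have hpxg : ∀ r ∈ Set.Ioi (0 : ℝ) ×ˢ (J ×ˢ K),
      px g r = p1 A (r.1, r.2.2) + B r.2 := by
    intro r hr
    have hAd : DifferentiableAt ℝ A (r.1, r.2.2) :=
      diffAt_of_contDiffOn hV hA (by norm_num) (Set.mem_prod.mpr ⟨hr.1, hr.2.2⟩)
    have hBd : DifferentiableAt ℝ B r.2 := diffAt_of_contDiffOn hW hB (by norm_num) hr.2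
    show fderiv ℝ g r (1, 0, 0) = _
    rw [hg, fderiv_gfun hAd hBd]
    show fderiv ℝ A (r.1, r.2.2) (1, 0) + (1 * B r.2 + r.1 * fderiv ℝ B r.2 (0, 0)) = _
    have : ((0, 0) : ℝ × ℝ) = 0 := rfl
    rw [this, (fderiv ℝ B r.2).map_zero]
    show _ = fderiv ℝ A (r.1, r.2.2) (1, 0) + B r.2
    ring
  have hpyg : ∀ r ∈ Set.Ioi (0 : ℝ) ×ˢ (J ×ˢ K),
      py g r = r.1 * p1 B r.2 := by
    intro r hr
    have hAd : DifferentiableAt ℝ A (r.1, r.2.2) :=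
      diffAt_of_contDiffOn hV hA (by norm_num) (Set.mem_prod.mpr ⟨hr.1, hr.2.2⟩)
    have hBd : DifferentiableAt ℝ B r.2 := diffAt_of_contDiffOn hW hB (by norm_num) hr.2
    show fderiv ℝ g r (0, 1, 0) = _
    rw [hg, fderiv_gfun hAd hBd]
    show fderiv ℝ A (r.1, r.2.2) (0, 0) + (0 * B r.2 + r.1 * fderiv ℝ B r.2 (1, 0)) = _
    have h0 : ((0, 0) : ℝ × ℝ) = 0 := rfl
    rw [h0, (fderiv ℝ A (r.1, r.2.2)).map_zero]
    show _ = r.1 * fderiv ℝ B r.2 (1, 0)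
    ring
  -- second stage
  have hevx : px g =ᶠ[nhds ((p, y, t) : ℝ × ℝ × ℝ)]
      (fun q : ℝ × ℝ × ℝ => p1 A (q.1, q.2.2) + B q.2) :=
    Filter.eventuallyEq_of_mem (hU.mem_nhds hmemU) hpxg
  have hevy : py g =ᶠ[nhds ((p, y, t) : ℝ × ℝ × ℝ)]
      (fun q : ℝ × ℝ × ℝ => q.1 * p1 B q.2) :=
    Filter.eventuallyEq_of_mem (hU.mem_nhds hmemU) hpyg
  have hA1d : DifferentiableAt ℝ (p1 A) (p, t) :=
    diffAt_of_contDiffOn hV hA1 (by norm_num) (Set.mem_prod.mpr ⟨hp, ht⟩)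
  have hBd : DifferentiableAt ℝ B (y, t) :=
    diffAt_of_contDiffOn hW hB (by norm_num) (Set.mem_prod.mpr ⟨hy, ht⟩)
  have hB1d : DifferentiableAt ℝ (p1 B) (y, t) :=
    diffAt_of_contDiffOn hW hB1 (by norm_num) (Set.mem_prod.mpr ⟨hy, ht⟩)
  have e1 : px (px g) (p, y, t) = p1 (p1 A) (p, t) := by
    show fderiv ℝ (px g) (p, y, t) (1, 0, 0) = _
    rw [hevx.fderiv_eq, fderiv_sumAB hA1d hBd]
    show fderiv ℝ (p1 A) (p, t) (1, 0) + fderiv ℝ B (y, t) (0, 0) = _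
    have h0 : ((0, 0) : ℝ × ℝ) = 0 := rfl
    rw [h0, (fderiv ℝ B (y, t)).map_zero, add_zero]
    rfl
  have e2 : pt (px g) (p, y, t) = p2 (p1 A) (p, t) + p2 B (y, t) := by
    show fderiv ℝ (px g) (p, y, t) (0, 0, 1) = _
    rw [hevx.fderiv_eq, fderiv_sumAB hA1d hBd]
    rfl
  have e3 : px (py g) (p, y, t) = p1 B (y, t) := by
    show fderiv ℝ (py g) (p, y, t) (1, 0, 0) = _
    rw [hevy.fderiv_eq, fderiv_mulB hB1d]
    show 1 * p1 B (y, t) + p * fderiv ℝ (p1 B) (y, t) (0, 0) = _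
    have h0 : ((0, 0) : ℝ × ℝ) = 0 := rfl
    rw [h0, (fderiv ℝ (p1 B) (y, t)).map_zero]
    ring
  have e4 : py (py g) (p, y, t) = p * p1 (p1 B) (y, t) := by
    show fderiv ℝ (py g) (p, y, t) (0, 1, 0) = _
    rw [hevy.fderiv_eq, fderiv_mulB hB1d]
    show 0 * p1 B (y, t) + p * fderiv ℝ (p1 B) (y, t) (1, 0) = _
    ring_nf
    rfl
  have := hG p hp y hy t ht
  rw [e1, e2, e3, e4] at this
  linarith [this]

theorem stmt9 (J K : Set ℝ)
    (hJo : IsOpen J) (hJc : J.OrdConnected) (hJne : J.Nonempty)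
    (hKo : IsOpen K) (hKc : K.OrdConnected)
    (A B : ℝ × ℝ → ℝ)
    (hA : ContDiffOn ℝ 3 A (Set.Ioi (0 : ℝ) ×ˢ K))
    (hB : ContDiffOn ℝ 3 B (J ×ˢ K))
    (hByyy : ∀ z ∈ J ×ˢ K, p1 (p1 (p1 B)) z ≠ 0)
    (hG : ∀ p > (0 : ℝ), ∀ y ∈ J, ∀ t ∈ K,
      (px (py (fun r => A (r.1, r.2.2) + r.1 * B (r.2.1, r.2.2))) (p, y, t)) ^ 2
        - py (py (fun r => A (r.1, r.2.2) + r.1 * B (r.2.1, r.2.2))) (p, y, t)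
            * px (px (fun r => A (r.1, r.2.2) + r.1 * B (r.2.1, r.2.2))) (p, y, t)
        - pt (px (fun r => A (r.1, r.2.2) + r.1 * B (r.2.1, r.2.2))) (p, y, t) = 0) :
    ∃ (μ : ℝ) (κ ρ : ℝ → ℝ), ∀ p > (0 : ℝ), ∀ t ∈ K,
      A (p, t) = μ * (p * Real.log p - p) + κ t * p + ρ t := by
  rcases K.eq_empty_or_nonempty with hKe | ⟨t₀, ht₀⟩
  · exact ⟨0, fun _ => 0, fun _ => 0, fun p hp t ht => by simp [hKe] at ht⟩
  have E := key_equation J K hJo hKo A B hA hB hG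
  have hV : IsOpen (Set.Ioi (0 : ℝ) ×ˢ K) := isOpen_Ioi.prod hKo
  have hW : IsOpen (J ×ˢ K) := hJo.prod hKo
  have hA1 : ContDiffOn ℝ 2 (p1 A) (Set.Ioi (0 : ℝ) ×ˢ K) :=
    pd2_contDiffOn hV hA (by norm_num) _
  have hA11 : ContDiffOn ℝ 1 (p1 (p1 A)) (Set.Ioi (0 : ℝ) ×ˢ K) :=
    pd2_contDiffOn hV hA1 (by norm_num) _
  have hA12 : ContDiffOn ℝ 1 (p2 (p1 A)) (Set.Ioi (0 : ℝ) ×ˢ K) :=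
    pd2_contDiffOn hV hA1 (by norm_num) _
  have hB1 : ContDiffOn ℝ 2 (p1 B) (J ×ˢ K) := pd2_contDiffOn hW hB (by norm_num) _
  have hB11 : ContDiffOn ℝ 1 (p1 (p1 B)) (J ×ˢ K) := pd2_contDiffOn hW hB1 (by norm_num) _
  -- B_yy is not constant in y
  have hnonconst : ∀ t ∈ K, ∃ y₁ ∈ J, ∃ y₂ ∈ J, p1 (p1 B) (y₁, t) ≠ p1 (p1 B) (y₂, t) := by
    intro t ht
    obtain ⟨y₀, hy₀⟩ := hJne
    by_contra hcon
    push_neg at hcon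
    have hconst : ∀ y ∈ J, p1 (p1 B) (y, t) = p1 (p1 B) (y₀, t) :=
      fun y hy => hcon y hy y₀ hy₀
    have hd : HasDerivAt (fun y => p1 (p1 B) (y, t)) (p1 (p1 (p1 B)) (y₀, t)) y₀ :=
      hasDerivAt_pd2_fst (diffAt_of_contDiffOn hW hB11 le_rfl (Set.mem_prod.mpr ⟨hy₀, ht⟩))
    have hev : (fun y => p1 (p1 B) (y, t)) =ᶠ[nhds y₀]
        (fun _ => p1 (p1 B) (y₀, t)) :=
      Filter.eventuallyEq_of_mem (hJo.mem_nhds hy₀) hconst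
    have hd2 : HasDerivAt (fun _ : ℝ => p1 (p1 B) (y₀, t)) (p1 (p1 (p1 B)) (y₀, t)) y₀ :=
      hd.congr_of_eventuallyEq hev.symm
    have := (hasDerivAt_const y₀ (p1 (p1 B) (y₀, t))).unique hd2
    exact hByyy (y₀, t) (Set.mem_prod.mpr ⟨hy₀, ht⟩) this.symm
  -- separation of variables
  have hsep : ∀ t ∈ K, ∀ p, 0 < p → ∀ q, 0 < q →
      p * p1 (p1 A) (p, t) = q * p1 (p1 A) (q, t) ∧
      p2 (p1 A) (p, t) = p2 (p1 A) (q, t) := by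
    intro t ht p hp q hq
    obtain ⟨y₁, hy₁, y₂, hy₂, hne⟩ := hnonconst t ht
    have e1 := E p hp y₁ hy₁ t ht
    have e2 := E q hq y₁ hy₁ t ht
    have e3 := E p hp y₂ hy₂ t ht
    have e4 := E q hq y₂ hy₂ t ht
    have h5 : (p1 (p1 B) (y₁, t) - p1 (p1 B) (y₂, t)) *
        (p * p1 (p1 A) (p, t) - q * p1 (p1 A) (q, t)) = 0 := by
      linear_combination e2 - e1 - e4 + e3
    have h6 : p * p1 (p1 A) (p, t) = q * p1 (p1 A) (q, t) := by
      rcases mul_eq_zero.mp h5 with h | h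
      · exact absurd (sub_eq_zero.mp h) hne
      · linarith [sub_eq_zero.mp h]
    refine ⟨h6, ?_⟩
    linear_combination e2 - e1 - p1 (p1 B) (y₁, t) * h6
  set μ : ℝ := p1 (p1 A) (1, t₀) with hμ
  have hKconv : Convex ℝ K := convex_iff_ordConnected.mpr hKc
  -- A_pp(p,t) = c(t)/p and A_pt(p,t) = d(t)
  have hApp : ∀ t ∈ K, ∀ p, 0 < p → p1 (p1 A) (p, t) = p1 (p1 A) (1, t) / p := by
    intro t ht p hp
    have := (hsep t ht p hp 1 one_pos).1
    field_simp
    linarith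
  have hApt : ∀ t ∈ K, ∀ p, 0 < p → p2 (p1 A) (p, t) = p2 (p1 A) (1, t) :=
    fun t ht p hp => (hsep t ht p hp 1 one_pos).2
  -- ∂p of A_pt vanishes
  have hz : ∀ t ∈ K, ∀ p, 0 < p → pd2 (1, 0) (p2 (p1 A)) (p, t) = 0 := by
    intro t ht p hp
    have hd : HasDerivAt (fun x => p2 (p1 A) (x, t)) (pd2 (1, 0) (p2 (p1 A)) (p, t)) p :=
      hasDerivAt_pd2_fst (diffAt_of_contDiffOn hV hA12 le_rfl (Set.mem_prod.mpr ⟨hp, ht⟩))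
    have hev : (fun x => p2 (p1 A) (x, t)) =ᶠ[nhds p] (fun _ => p2 (p1 A) (1, t)) :=
      Filter.eventuallyEq_of_mem (isOpen_Ioi.mem_nhds hp) (fun x hx => hApt t ht x hx)
    have hd2 : HasDerivAt (fun _ : ℝ => p2 (p1 A) (1, t)) (pd2 (1, 0) (p2 (p1 A)) (p, t)) p :=
      hd.congr_of_eventuallyEq hev.symm
    exact ((hasDerivAt_const p (p2 (p1 A) (1, t))).unique hd2).symm
  -- Clairaut: ∂t of A_pp vanishes
  have hcl : ∀ t ∈ K, ∀ p, 0 < p → pd2 (0, 1) (p1 (p1 A)) (p, t) = 0 := by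
    intro t ht p hp
    have hct : ContDiffAt ℝ 2 (p1 A) (p, t) :=
      hA1.contDiffAt (hV.mem_nhds (Set.mem_prod.mpr ⟨hp, ht⟩))
    have := pd2_comm hct (0, 1) (1, 0)
    show pd2 (0, 1) (pd2 (1, 0) (p1 A)) (p, t) = 0
    rw [this]
    exact hz t ht p hp
  -- the coefficient is constant on K
  have hc : ∀ t ∈ K, p1 (p1 A) (1, t) = μ := by
    intro t ht
    refine const_of_hasDerivAt_zero (f := fun x => p1 (p1 A) (1, x)) hKconv hKo ?_ ht ht₀
    intro s hs
    have hd : HasDerivAt (fun x => p1 (p1 A) (1, x)) (pd2 (0, 1) (p1 (p1 A)) (1, s)) s :=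
      hasDerivAt_pd2_snd (diffAt_of_contDiffOn hV hA11 le_rfl
        (Set.mem_prod.mpr ⟨Set.mem_Ioi.mpr one_pos, hs⟩))
    rwa [hcl s hs 1 one_pos] at hd
  -- first integration: A_p(p,t) = μ log p + κ t
  set κ : ℝ → ℝ := fun t => p1 A (1, t) with hκ
  have hAp : ∀ t ∈ K, ∀ p, 0 < p → p1 A (p, t) = μ * Real.log p + κ t := by
    intro t ht p hp
    have key : (fun x => p1 A (x, t) - μ * Real.log x) p
        = (fun x => p1 A (x, t) - μ * Real.log x) 1 := by
      refine const_of_hasDerivAt_zero (f := fun x => p1 A (x, t) - μ * Real.log x)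
        (convex_Ioi 0) isOpen_Ioi ?_ hp (Set.mem_Ioi.mpr one_pos)
      intro x hx
      have hx0 : (0 : ℝ) < x := hx
      have h1 : HasDerivAt (fun x => p1 A (x, t)) (pd2 (1, 0) (p1 A) (x, t)) x :=
        hasDerivAt_pd2_fst (diffAt_of_contDiffOn hV hA1 (by norm_num)
          (Set.mem_prod.mpr ⟨hx0, ht⟩))
      have h2 : HasDerivAt (fun x => μ * Real.log x) (μ * x⁻¹) x :=
        (Real.hasDerivAt_log (ne_of_gt hx0)).const_mul μ
      have h3 := h1.sub h2
      have h4 : pd2 (1, 0) (p1 A) (x, t) - μ * x⁻¹ = 0 := by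
        show p1 (p1 A) (x, t) - μ * x⁻¹ = 0
        rw [hApp t ht x hx0, hc t ht]
        field_simp
        ring
      rwa [h4] at h3
    simp only [Real.log_one, mul_zero, sub_zero] at key
    have : p1 A (p, t) - μ * Real.log p = p1 A (1, t) := key
    rw [hκ]
    linarith
  -- second integration
  refine ⟨μ, κ, fun t => A (1, t) + μ - κ t, ?_⟩
  intro p hp t ht
  have key : (fun x => A (x, t) - (μ * (x * Real.log x - x) + κ t * x)) p
      = (fun x => A (x, t) - (μ * (x * Real.log x - x) + κ t * x)) 1 := by
    refine const_of_hasDerivAt_zero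
        (f := fun x => A (x, t) - (μ * (x * Real.log x - x) + κ t * x))
        (convex_Ioi 0) isOpen_Ioi ?_ hp (Set.mem_Ioi.mpr one_pos)
    intro x hx
    have hx0 : (0 : ℝ) < x := hx
    have h1 : HasDerivAt (fun x => A (x, t)) (pd2 (1, 0) A (x, t)) x :=
      hasDerivAt_pd2_fst (diffAt_of_contDiffOn hV hA (by norm_num)
        (Set.mem_prod.mpr ⟨hx0, ht⟩))
    have hlog : HasDerivAt (fun x : ℝ => x * Real.log x) (1 * Real.log x + x * x⁻¹) x :=
      (hasDerivAt_id x).mul (Real.hasDerivAt_log (ne_of_gt hx0))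
    have h2 : HasDerivAt (fun x : ℝ => μ * (x * Real.log x - x) + κ t * x)
        (μ * (1 * Real.log x + x * x⁻¹ - 1) + κ t * 1) x :=
      ((hlog.sub (hasDerivAt_id x)).const_mul μ).add ((hasDerivAt_id x).const_mul (κ t))
    have h3 := h1.sub h2
    have h4 : pd2 (1, 0) A (x, t) - (μ * (1 * Real.log x + x * x⁻¹ - 1) + κ t * 1) = 0 := by
      have hxx : x * x⁻¹ = 1 := mul_inv_cancel₀ (ne_of_gt hx0)
      have : pd2 (1, 0) A (x, t) = μ * Real.log x + κ t := hAp t ht x hx0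
      rw [this, hxx]
      ring
    rwa [h4] at h3
  simp only [Real.log_one, mul_zero, zero_sub, mul_one] at key
  have : A (p, t) - (μ * (p * Real.log p - p) + κ t * p)
      = A (1, t) - (μ * (1 * 0 - 1) + κ t * 1) := by
    simpa [Real.log_one] using key
  show A (p, t) = μ * (p * Real.log p - p) + κ t * p + (A (1, t) + μ - κ t)
  linarith [this]
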